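/- The impartial game {*0; {*1; {*2}}} — i.e. the game whose two options are the empty game 0 and the game R, where R has options nim 1 and the game {*2} whose unique option is nim 2 — is misère-indistinguishable from nim 1. -/

import Mathlib

/-- An impartial game: a position is given by the list of its options
(the positions reachable in one move); both players have the same moves. -/
inductive Game : Type
  | node : List Game → Game

namespace Game

/-- The options of a position. -/
def options : Game → List Game
  | node l => l

/-- Disjunctive sum of two games: a move is made in exactly one component. -/
def add : Game → Game → Game
  | node l, node r =>
      node ((l.attach.map fun x => add x.1 (node r)) ++
            (r.attach.map fun y => add (node l) y.1))
termination_by g h => sizeOf g + sizeOf h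
decreasing_by
  · have := List.sizeOf_lt_of_mem x.2; simp_wf; (try simp only [Game.node.sizeOf_spec] at *); omega
  · have := List.sizeOf_lt_of_mem y.2; simp_wf; (try simp only [Game.node.sizeOf_spec] at *); omega

/-- Misère win (for the player to move): the game has no options,
or some option is a misère loss. -/
def MisereWin : Game → Prop
  | node l => l = [] ∨ ∃ x : {a // a ∈ l}, ¬ MisereWin x.1
decreasing_by
  simp_wf; have := List.sizeOf_lt_of_mem x.2; omega

/-- Misère indistinguishability: adding any game `T` yields the same misère outcome. -/
def Indist (G H : Game) : Prop :=
  ∀ T : Game, MisereWin (add G T) ↔ MisereWin (add H T)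

/-- The Nim-heap of size `n`, whose options are `nim 0, …, nim (n-1)`. -/
def nim : ℕ → Game
  | 0 => node []
  | n + 1 => node ((nim n).options ++ [nim n])

/-- Normal-play win (for the player to move): some option is a normal-play loss.
A player unable to move loses. -/
def NormalWin : Game → Prop
  | node l => ∃ x : {a // a ∈ l}, ¬ NormalWin x.1
decreasing_by
  simp_wf; have := List.sizeOf_lt_of_mem x.2; omega

/-- The Grundy value: the mex of the Grundy values of the options. -/
noncomputable def grundy : Game → ℕ
  | node l => sInf {n : ℕ | ∀ x : {a // a ∈ l}, grundy x.1 ≠ n}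
decreasing_by
  simp_wf; have := List.sizeOf_lt_of_mem x.2; omega

/-- The height of a game: the maximal number of moves in a play from it. -/
def height : Game → ℕ
  | node l => (l.attach.map fun x => height x.1 + 1).foldr max 0
decreasing_by
  simp_wf; have := List.sizeOf_lt_of_mem x.2; omega

/-- A canonical tree: duplicate options are removed, hereditarily. -/
def Canonical : Game → Prop
  | node l => l.Nodup ∧ ∀ x : {a // a ∈ l}, Canonical x.1
decreasing_by
  simp_wf; have := List.sizeOf_lt_of_mem x.2; omega

/-- Extensional (set-theoretic) equality of game trees. -/
def ExtEq : Game → Game → Prop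
  | node l, node r =>
      (∀ x : {a // a ∈ l}, ∃ y : {b // b ∈ r}, ExtEq x.1 y.1) ∧
      (∀ y : {b // b ∈ r}, ∃ x : {a // a ∈ l}, ExtEq x.1 y.1)
termination_by g _ => sizeOf g
decreasing_by
  · have := List.sizeOf_lt_of_mem x.2; simp_wf; (try simp only [Game.node.sizeOf_spec] at *); omega
  · have := List.sizeOf_lt_of_mem x.2; simp_wf; (try simp only [Game.node.sizeOf_spec] at *); omega

/-- The disjunctive sum of `n` copies of a game. -/
def copies : ℕ → Game → Game
  | 0, _ => node []
  | n + 1, g => add g (copies n g)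

/-- `G` is a reducer of `H` if `H` is obtained from `G` by adding reversible
moves `R₁, R₂, …`: the options of `H` are those of `G` together with the `Rⱼ`,
each `Rⱼ` having `G` among its options; when `G` is empty one additionally
requires `H` to be a misère win. -/
def Reducer (G H : Game) : Prop :=
  ∃ Rs : List Game,
    (∀ x, x ∈ H.options ↔ x ∈ G.options ∨ x ∈ Rs) ∧
    (∀ R ∈ Rs, G ∈ R.options) ∧
    (G.options = [] → MisereWin H)

/-- A canonical tree is reduced if its only reducer is itself (as a set of
options) and all of its options are reduced. -/
def Reduced : Game → Prop
  | node l =>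
      (∀ G, Reducer G (node l) → ∀ x, x ∈ G.options ↔ x ∈ l) ∧
      ∀ x : {a // a ∈ l}, Reduced x.1
decreasing_by
  simp_wf; have := List.sizeOf_lt_of_mem x.2; omega

end Game


namespace Game

theorem misereWin_iff' (l : List Game) :
    MisereWin (node l) ↔ l = [] ∨ ∃ x ∈ l, ¬ MisereWin x := by
  rw [MisereWin]
  constructor
  · rintro (h | ⟨⟨x, hx⟩, h⟩)
    · exact Or.inl h
    · exact Or.inr ⟨x, hx, h⟩
  · rintro (h | ⟨x, hx, h⟩)
    · exact Or.inl h
    · exact Or.inr ⟨⟨x, hx⟩, h⟩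

theorem add_node' (l r : List Game) :
    add (node l) (node r) =
      node (l.map (fun a => add a (node r)) ++ r.map (fun b => add (node l) b)) := by
  rw [add]
  congr 1 <;> simp [List.attach_map_val]

theorem gameInd' (P : Game → Prop) (h : ∀ l, (∀ g ∈ l, P g) → P (node l)) : ∀ g, P g
  | node l => h l (fun g _ => gameInd' P h g)
decreasing_by
  have := List.sizeOf_lt_of_mem (by assumption : g ∈ l); simp; omega

theorem nim_one' : nim 1 = node [node []] := rfl

theorem key' : ∀ T, MisereWin (add (node [node [], node [nim 1, node [nim 2]]]) T) ↔
    MisereWin (add (nim 1) T) := by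
  apply gameInd'
  intro t IH
  rw [nim_one'] at *
  rw [add_node', add_node', misereWin_iff', misereWin_iff']
  simp only [List.map_cons, List.map_nil, List.cons_append, List.nil_append,
    List.mem_cons, List.mem_append, List.mem_map, reduceCtorEq, false_or,
    List.cons_ne_nil, List.append_ne_nil_of_left_ne_nil]
  constructor
  · rintro (⟨x, (hx | hx | ⟨u, hu, rfl⟩), hxl⟩)
    · exact ⟨x, Or.inl hx, hxl⟩
    · subst hx
      rw [add_node', misereWin_iff'] at hxl
      push_neg at hxl
      obtain ⟨-, hall⟩ := hxl
      have hwin : MisereWin (add (node [node []]) (node t)) := by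
        apply hall
        simp
      rw [add_node', misereWin_iff'] at hwin
      rcases hwin with h | ⟨y, hy, hyl⟩
      · simp at h
      · exact ⟨y, by simpa using hy, hyl⟩
    · refine ⟨_, Or.inr ⟨u, hu, rfl⟩, ?_⟩
      rw [← IH u hu]
      exact hxl
  · rintro ⟨x, (hx | ⟨u, hu, rfl⟩), hxl⟩
    · exact ⟨x, Or.inl hx, hxl⟩
    · refine ⟨_, Or.inr (Or.inr ⟨u, hu, rfl⟩), ?_⟩
      rw [IH u hu]
      exact hxl

end Game

open Game in
/-- The game `{*0; {*1; {*2}}}` is misère-indistinguishable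
from `nim 1`. -/
theorem stmt14 :
    Indist (Game.node [Game.node [], Game.node [nim 1, Game.node [nim 2]]]) (nim 1) := by
  exact Game.key'
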